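/- Let a, b, d, Γ ∈ ℝ with c := a + b > 0, and let R > 0. For ν > 0 define g_ν(r) = Γ(1 − e^{−c r²/(4ν)})/(2π r²) (extended by its limit at r = 0) and the planar velocity profile v_ν(x, y) = (−a x − g_ν(r) y, −b y + g_ν(r) x, d) with r = √(x² + y²). Then the regularized core energy has a finite inviscid limit: lim_{ν→0⁺} [ (1/2) ∫_{x²+y²≤R²} |v_ν(x, y)|² dx dy − (Γ²/(8π)) ( γ_EM + log(c R²/(8ν)) ) ] = π R² d²/2 + π R⁴ (a² + b²)/8, where γ_EM denotes the Euler–Mascheroni constant. In particular, the kinetic energy of the vortex core diverges logarithmically as ν → 0⁺ with coefficient Γ²/(8π) (the anomalous term in the Hamiltonian). -/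

import Mathlib

noncomputable section

open MeasureTheory Filter Set
open scoped RealInnerProductSpace Topology

abbrev E3 : Type := EuclideanSpace ℝ (Fin 3)
abbrev E2 : Type := EuclideanSpace ℝ (Fin 2)

def mk3 (a b c : ℝ) : E3 := (EuclideanSpace.equiv (Fin 3) ℝ).symm ![a, b, c]

def e3 (i : Fin 3) : E3 := EuclideanSpace.single i 1

/-- `∂_j v_i` at `p`. -/
def pder (v : E3 → E3) (i j : Fin 3) (p : E3) : ℝ := fderiv ℝ v p (e3 j) i

def div3 (v : E3 → E3) (p : E3) : ℝ := ∑ i, pder v i i p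

def curl3 (v : E3 → E3) (p : E3) : E3 :=
  mk3 (pder v 2 1 p - pder v 1 2 p) (pder v 0 2 p - pder v 2 0 p)
    (pder v 1 0 p - pder v 0 1 p)

def lap3 (f : E3 → ℝ) (p : E3) : ℝ :=
  ∑ j, fderiv ℝ (fun x => fderiv ℝ f x (e3 j)) p (e3 j)

def IsTangentAt (S : Set E3) (p v : E3) : Prop :=
  ∃ γ : ℝ → E3, (∀ t, γ t ∈ S) ∧ γ 0 = p ∧ HasDerivAt γ v 0

def IsSurface (k : ℕ∞) (S : Set E3) : Prop :=
  ∀ p ∈ S, ∃ (f : E2 → E3) (U : Set E2) (V : Set E3),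
    IsOpen U ∧ IsOpen V ∧ p ∈ V ∧ ContDiffOn ℝ k f U ∧ Set.InjOn f U ∧
    f '' U = S ∩ V ∧ ∀ x ∈ U, Function.Injective (fderiv ℝ f x)

structure CVSBase (S Ωm Ωp : Set E3) (vm vp : E3 → E3) : Prop where
  openm : IsOpen Ωm
  openp : IsOpen Ωp
  disj : Disjoint Ωm Ωp
  disjm : Disjoint Ωm S
  disjp : Disjoint Ωp S
  clm : S ⊆ closure Ωm
  clp : S ⊆ closure Ωp
  smoothm : ∃ W, IsOpen W ∧ Ωm ∪ S ⊆ W ∧ ContDiffOn ℝ 1 vm W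
  smoothp : ∃ W, IsOpen W ∧ Ωp ∪ S ⊆ W ∧ ContDiffOn ℝ 1 vp W
  divm : ∀ p ∈ Ωm, div3 vm p = 0
  divp : ∀ p ∈ Ωp, div3 vp p = 0
  curlm : ∀ p ∈ Ωm, curl3 vm p = 0
  curlp : ∀ p ∈ Ωp, curl3 vp p = 0
  tangentm : ∀ p ∈ S, IsTangentAt S p (vm p)
  tangentp : ∀ p ∈ S, IsTangentAt S p (vp p)

structure CVSPair (S Ωm Ωp : Set E3) (vm vp : E3 → E3)
    extends CVSBase S Ωm Ωp vm vp : Prop where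
  strain : ∀ p ∈ S, (fderiv ℝ vp p + fderiv ℝ vm p) (vp p - vm p) = 0
  bernoulli : ∀ p ∈ S, ∀ᶠ q in 𝓝[S] p,
    ‖vp q‖ ^ 2 - ‖vm q‖ ^ 2 = ‖vp p‖ ^ 2 - ‖vm p‖ ^ 2

/-- the open region `Ωm` is the bounded region enclosed by the closed surface `S`,
and `Ωp` is its exterior. -/
structure EnclosedBy (S Ωm Ωp : Set E3) : Prop where
  openm : IsOpen Ωm
  bounded : Bornology.IsBounded Ωm
  fr : frontier Ωm = S
  plus : Ωp = (Ωm ∪ S)ᶜ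

namespace S16


def psi (s : ℝ) : ℝ := if s = 0 then 1 else (1 - Real.exp (-s)) / s

lemma hasDerivAt_one_sub_exp_neg (x : ℝ) :
    HasDerivAt (fun s : ℝ => 1 - Real.exp (-s)) (Real.exp (-x)) x := by
  have h := ((Real.hasDerivAt_exp (-x)).comp x (hasDerivAt_neg x)).const_sub 1
  simpa using h

lemma psi_cont : Continuous psi := by
  rw [continuous_iff_continuousAt]
  intro x
  rcases ne_or_eq x 0 with hx | rfl
  · have h : ContinuousAt (fun y : ℝ => (1 - Real.exp (-y)) / y) x :=
      ContinuousAt.div (by fun_prop) continuousAt_id hx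
    apply h.congr
    filter_upwards [isOpen_ne.mem_nhds hx] with y hy
    simp [psi, hy]
  · have hd : HasDerivAt (fun s : ℝ => 1 - Real.exp (-s)) 1 0 := by
      simpa using hasDerivAt_one_sub_exp_neg 0
    have hs := hasDerivAt_iff_tendsto_slope.mp hd
    have h1 : Tendsto psi (𝓝[≠] (0:ℝ)) (𝓝 1) := by
      apply hs.congr'
      filter_upwards [self_mem_nhdsWithin] with y (hy : y ≠ 0)
      simp [slope, psi, hy, div_eq_inv_mul]
    have h2 : Tendsto psi (pure (0:ℝ)) (𝓝 1) := by
      simpa [psi] using tendsto_pure_nhds psi 0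
    have : ContinuousAt psi 0 := by
      unfold ContinuousAt
      rw [show psi 0 = 1 by simp [psi], ← nhdsNE_sup_pure 0,
        tendsto_sup]
      exact ⟨h1, h2⟩
    exact this

def chi (s : ℝ) : ℝ := (1 - Real.exp (-s)) ^ 2 / s

lemma chi_eq (s : ℝ) : chi s = psi s * (1 - Real.exp (-s)) := by
  rcases eq_or_ne s 0 with rfl | hs
  · simp [chi, psi]
  · simp only [chi, psi, if_neg hs]; ring

lemma chi_cont : Continuous chi := by
  have h : Continuous fun s => psi s * (1 - Real.exp (-s)) := psi_cont.mul (by fun_prop)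
  exact (funext chi_eq : chi = _) ▸ h

def A (T : ℝ) : ℝ := ∫ s in (0:ℝ)..T, psi s
def I (T : ℝ) : ℝ := ∫ s in (0:ℝ)..T, chi s

lemma chi_eq_psi (s : ℝ) : chi s = 2 * psi s - 2 * psi (2 * s) := by
  rcases eq_or_ne s 0 with rfl | hs
  · simp [chi, psi]
  · have h2 : (2:ℝ) * s ≠ 0 := by simpa using hs
    simp only [chi, psi, if_neg hs, if_neg h2]
    have hx : Real.exp (-(2 * s)) = Real.exp (-s) ^ 2 := by
      rw [sq, ← Real.exp_add]; ring_nf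
    rw [hx]
    field_simp
    ring

lemma I_eq (T : ℝ) : I T = 2 * A T - A (2 * T) := by
  have h1 : IntervalIntegrable psi MeasureTheory.volume 0 T := psi_cont.intervalIntegrable _ _
  have h2 : IntervalIntegrable (fun s => psi (2 * s)) MeasureTheory.volume 0 T :=
    (psi_cont.comp (by fun_prop)).intervalIntegrable _ _
  have : I T = ∫ s in (0:ℝ)..T, (2 * psi s - 2 * psi (2 * s)) :=
    intervalIntegral.integral_congr fun s _ => chi_eq_psi s
  rw [this, intervalIntegral.integral_sub (h1.const_mul 2) (h2.const_mul 2),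
    intervalIntegral.integral_const_mul, intervalIntegral.integral_const_mul,
    intervalIntegral.integral_comp_mul_left psi (two_ne_zero)]
  simp only [A, mul_zero, smul_eq_mul]
  ring






lemma hasDerivAt_A (T : ℝ) : HasDerivAt A (psi T) T :=
  intervalIntegral.integral_hasDerivAt_right (psi_cont.intervalIntegrable _ _)
    (psi_cont.stronglyMeasurableAtFilter _ _) psi_cont.continuousAt

lemma fA_anti : AntitoneOn (fun T => A T - Real.log T) (Set.Ioi (0:ℝ)) := by
  have hderiv : ∀ T ∈ Set.Ioi (0:ℝ),
      HasDerivAt (fun T => A T - Real.log T) (psi T - T⁻¹) T := fun T hT =>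
    (hasDerivAt_A T).sub (Real.hasDerivAt_log (ne_of_gt hT))
  apply antitoneOn_of_deriv_nonpos (convex_Ioi 0)
  · exact fun T hT => ((hderiv T hT).continuousAt).continuousWithinAt
  · intro T hT
    rw [interior_Ioi] at hT
    exact (hderiv T hT).differentiableAt.differentiableWithinAt
  · intro T hT
    rw [interior_Ioi] at hT
    rw [(hderiv T hT).deriv]
    have hT0 : (0:ℝ) < T := hT
    have h1 : psi T = (1 - Real.exp (-T)) / T := by simp [psi, ne_of_gt hT0]
    have h2 : psi T - T⁻¹ = -Real.exp (-T) / T := by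
      rw [h1]; field_simp; ring
    rw [h2]
    apply div_nonpos_of_nonpos_of_nonneg _ hT0.le
    simp [(Real.exp_pos _).le]
  




lemma harmonic_eq_integral (n : ℕ) :
    (harmonic n : ℝ) = ∫ t in (0:ℝ)..1, ∑ k ∈ Finset.range n, (1 - t)^k := by
  rw [intervalIntegral.integral_finset_sum
    (fun k _ => (Continuous.intervalIntegrable (by fun_prop) _ _))]
  have h : ∀ k ∈ Finset.range n, (∫ t in (0:ℝ)..1, (1 - t)^k) = ((k:ℝ)+1)⁻¹ := by
    intro k _
    rw [intervalIntegral.integral_comp_sub_left (fun x : ℝ => x ^ k) 1]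
    norm_num [integral_pow]
  rw [Finset.sum_congr rfl h, harmonic]
  push_cast
  rfl

lemma pow_sub_pow_le' (x y : ℝ) (h0 : 0 ≤ y) (hyx : y ≤ x) (n : ℕ) :
    x^(n+1) - y^(n+1) ≤ (n+1 : ℝ) * x^n * (x - y) := by
  induction n with
  | zero => simp
  | succ m ih =>
    have hx0 : 0 ≤ x := h0.trans hyx
    have key : x^(m+1+1) - y^(m+1+1) = x * (x^(m+1) - y^(m+1)) + (x - y) * y^(m+1) := by ring
    rw [key]
    have h1 : x * (x^(m+1) - y^(m+1)) ≤ x * (((m:ℝ)+1) * x^m * (x-y)) :=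
      mul_le_mul_of_nonneg_left ih hx0
    have h2 : (x - y) * y^(m+1) ≤ (x - y) * x^(m+1) :=
      mul_le_mul_of_nonneg_left (pow_le_pow_left₀ h0 hyx _) (sub_nonneg.2 hyx)
    calc x * (x^(m+1) - y^(m+1)) + (x - y) * y^(m+1)
        ≤ x * (((m:ℝ)+1) * x^m * (x-y)) + (x - y) * x^(m+1) := add_le_add h1 h2
      _ = (((m+1:ℕ):ℝ)+1) * x^(m+1) * (x - y) := by push_cast; ring

lemma ue_le_one {u : ℝ} (hu : 0 ≤ u) : u * Real.exp (-u) ≤ 1 := by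
  rw [Real.exp_neg, mul_inv_le_iff₀ (Real.exp_pos u)]
  nlinarith [Real.add_one_le_exp u]

lemma exp_sub_le {t : ℝ} (ht0 : 0 ≤ t) (ht1 : t ≤ 1) :
    Real.exp (-t) - (1 - t) ≤ (3/4) * t^2 := by
  have h := Real.exp_bound (x := -t) (by rw [abs_neg, abs_of_nonneg ht0]; exact ht1) (n := 2)
    (by norm_num)
  have h2 : ∑ i ∈ Finset.range 2, (-t)^i / (i.factorial : ℝ) = 1 - t := by
    simp [Finset.sum_range_succ]; ring
  rw [h2, abs_neg, abs_of_nonneg ht0] at h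
  norm_num [Nat.factorial] at h
  nlinarith [(abs_le.mp h).2]

lemma F_bound {n : ℕ} (hn : 1 ≤ n) {t : ℝ} (ht : t ∈ Set.Ioc (0:ℝ) 1) :
    |((1-t)^n - Real.exp (-((n:ℝ)*t)))/t| ≤ 3 := by
  obtain ⟨ht0, ht1⟩ := ht
  set x := Real.exp (-t) with hxdef
  set y := 1 - t with hydef
  have hy0 : 0 ≤ y := by simp [hydef]; linarith
  have hyx : y ≤ x := by
    have := Real.add_one_le_exp (-t); simp [hydef, hxdef]; linarith
  have hx1 : x ≤ 1 := Real.exp_le_one_iff.mpr (by linarith)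
  have hx0 : 0 ≤ x := hy0.trans hyx
  have hexp : Real.exp (-((n:ℝ)*t)) = x^n := by
    rw [hxdef, ← Real.exp_nat_mul]; ring_nf
  obtain ⟨m, rfl⟩ := Nat.exists_eq_add_of_le hn
  set N := 1 + m with hN
  have hpow : x^N - y^N ≤ (N:ℝ) * x^m * (x - y) := by
    have := pow_sub_pow_le' x y hy0 hyx m
    have hNm : N = m + 1 := by omega
    rw [hNm]; push_cast; convert this using 2 <;> push_cast <;> ring
  have hxy : x - y ≤ (3/4) * t^2 := exp_sub_le ht0.le ht1
  have hxm : x ^ m = Real.exp (-((m:ℝ)*t)) := by rw [hxdef, ← Real.exp_nat_mul]; ring_nf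
  have hmt : (m:ℝ) * t * Real.exp (-((m:ℝ)*t)) ≤ 1 := ue_le_one (by positivity)
  have hx_le : x ^ m ≤ 1 := pow_le_one₀ hx0 hx1
  have hNxm : (N:ℝ) * x^m * t ≤ 2 := by
    have h1 : (m:ℝ) * x^m * t ≤ 1 := by rw [hxm]; nlinarith [Real.exp_pos (-((m:ℝ)*t))]
    have h2 : x^m * t ≤ 1 := by nlinarith [pow_nonneg hx0 m]
    push_cast [hN]; nlinarith [pow_nonneg hx0 m]
  have hnum : (1-t)^N - Real.exp (-((N:ℝ)*t)) = -(x^N - y^N) := by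
    rw [hexp, hydef]; ring
  rw [hnum, abs_div, abs_neg, abs_of_nonneg (by positivity : (0:ℝ) ≤ t),
    abs_of_nonneg (sub_nonneg.2 (pow_le_pow_left₀ hy0 hyx N))]
  rw [div_le_iff₀ ht0]
  calc x^N - y^N ≤ (N:ℝ) * x^m * (x - y) := hpow
    _ ≤ (N:ℝ) * x^m * ((3/4) * t^2) := by
        apply mul_le_mul_of_nonneg_left hxy (by positivity)
    _ ≤ 3 * t := by nlinarith [ht0, mul_pos ht0 ht0]






lemma hF_eq {n : ℕ} (hn : 1 ≤ n) {t : ℝ} (ht : t ≠ 0) :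
    (n:ℝ) * psi ((n:ℝ) * t) - ∑ k ∈ Finset.range n, (1-t)^k
      = ((1-t)^n - Real.exp (-((n:ℝ)*t)))/t := by
  have hn0 : (n:ℝ) ≠ 0 := Nat.cast_ne_zero.mpr (by omega)
  have hnt : (n:ℝ) * t ≠ 0 := mul_ne_zero hn0 ht
  have hsum : ∑ k ∈ Finset.range n, (1-t)^k = (1 - (1-t)^n)/t := by
    have h := geom_sum_mul (1-t) n
    rw [eq_div_iff ht]
    nlinarith [h]
  rw [hsum, psi, if_neg hnt]
  field_simp
  ring

lemma tendsto_A_sub_harmonic :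
    Tendsto (fun n : ℕ => A n - (harmonic n : ℝ)) atTop (𝓝 0) := by
  have key : Tendsto (fun n : ℕ => ∫ t in (0:ℝ)..1,
      ((n:ℝ) * psi ((n:ℝ) * t) - ∑ k ∈ Finset.range n, (1-t)^k)) atTop
      (𝓝 (∫ t in (0:ℝ)..1, (0:ℝ))) := by
    apply intervalIntegral.tendsto_integral_filter_of_dominated_convergence
      (bound := fun _ => 3)
    · apply Eventually.of_forall
      intro n
      apply Continuous.aestronglyMeasurable
      exact (continuous_const.mul (psi_cont.comp (by fun_prop))).sub (by fun_prop)
    · filter_upwards [eventually_ge_atTop 1] with n hn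
      apply MeasureTheory.ae_of_all
      intro t ht
      rw [Set.uIoc_of_le (by norm_num : (0:ℝ) ≤ 1)] at ht
      rw [Real.norm_eq_abs, hF_eq hn (ne_of_gt ht.1)]
      exact F_bound hn ht
    · exact intervalIntegrable_const
    · apply MeasureTheory.ae_of_all
      intro t ht
      rw [Set.uIoc_of_le (by norm_num : (0:ℝ) ≤ 1)] at ht
      have hrw : ∀ᶠ n : ℕ in atTop,
          (n:ℝ) * psi ((n:ℝ) * t) - ∑ k ∈ Finset.range n, (1-t)^k
            = ((1-t)^n - Real.exp (-((n:ℝ)*t)))/t := by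
        filter_upwards [eventually_ge_atTop 1] with n hn
        exact hF_eq hn (ne_of_gt ht.1)
      have hlim : Tendsto (fun n : ℕ => ((1-t)^n - Real.exp (-((n:ℝ)*t)))/t) atTop
          (𝓝 0) := by
        rw [show (0:ℝ) = (0 - 0)/t by simp]
        apply Tendsto.div_const
        apply Tendsto.sub
        · apply tendsto_pow_atTop_nhds_zero_of_abs_lt_one
          rw [abs_lt]
          exact ⟨by linarith [ht.1, ht.2], by linarith [ht.1]⟩
        · have hh : ∀ n : ℕ, Real.exp (-((n:ℝ)*t)) = (Real.exp (-t))^n := by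
            intro n; rw [← Real.exp_nat_mul]; ring_nf
          simp_rw [hh]
          apply tendsto_pow_atTop_nhds_zero_of_abs_lt_one
          rw [abs_lt]
          have h1 : Real.exp (-t) < 1 := Real.exp_lt_one_iff.mpr (by linarith [ht.1])
          have h2 : 0 < Real.exp (-t) := Real.exp_pos _
          exact ⟨by linarith, by linarith⟩
      exact Tendsto.congr' (hrw.mono fun n e => e.symm) hlim
  simp only [intervalIntegral.integral_zero] at key
  apply key.congr'
  filter_upwards [eventually_ge_atTop 1] with n hn
  have hn0 : (n:ℝ) ≠ 0 := Nat.cast_ne_zero.mpr (by omega)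
  have hint1 : IntervalIntegrable (fun t => (n:ℝ) * psi ((n:ℝ) * t))
      MeasureTheory.volume 0 1 :=
    Continuous.intervalIntegrable (continuous_const.mul (psi_cont.comp (by fun_prop))) _ _
  have hint2 : IntervalIntegrable (fun t => ∑ k ∈ Finset.range n, (1-t)^k)
      MeasureTheory.volume 0 1 := Continuous.intervalIntegrable (by fun_prop) _ _
  rw [intervalIntegral.integral_sub hint1 hint2, ← harmonic_eq_integral,
    intervalIntegral.integral_const_mul,
    intervalIntegral.integral_comp_mul_left psi hn0]
  simp only [A, smul_eq_mul, mul_zero]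
  rw [← mul_assoc, mul_inv_cancel₀ hn0, one_mul, mul_one]

lemma tendsto_fA_nat : Tendsto (fun n : ℕ => A n - Real.log n) atTop
    (𝓝 Real.eulerMascheroniConstant) := by
  have h := tendsto_A_sub_harmonic.add Real.tendsto_harmonic_sub_log
  rw [zero_add] at h
  apply h.congr
  intro n; ring

lemma tendsto_fA : Tendsto (fun T : ℝ => A T - Real.log T) atTop
    (𝓝 Real.eulerMascheroniConstant) := by
  set γ := Real.eulerMascheroniConstant
  have h1 : Tendsto (fun T : ℝ => A (⌊T⌋₊ : ℝ) - Real.log (⌊T⌋₊ : ℝ)) atTop (𝓝 γ) :=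
    tendsto_fA_nat.comp tendsto_nat_floor_atTop
  have h2 : Tendsto (fun T : ℝ => A ((⌊T⌋₊ : ℝ) + 1) - Real.log ((⌊T⌋₊ : ℝ) + 1))
      atTop (𝓝 γ) := by
    have hseq : Tendsto (fun n : ℕ => A ((n:ℝ)+1) - Real.log ((n:ℝ)+1)) atTop (𝓝 γ) := by
      have := tendsto_fA_nat.comp (tendsto_add_atTop_nat 1)
      apply this.congr
      intro n
      simp only [Function.comp_apply]
      push_cast
      ring_nf
    exact hseq.comp tendsto_nat_floor_atTop
  apply tendsto_of_tendsto_of_tendsto_of_le_of_le' h2 h1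
  · filter_upwards [eventually_ge_atTop (1:ℝ)] with T hT
    have hfl : (1:ℝ) ≤ (⌊T⌋₊ : ℝ) := by
      have : 1 ≤ ⌊T⌋₊ := Nat.le_floor (by exact_mod_cast hT)
      exact_mod_cast this
    exact fA_anti (Set.mem_Ioi.mpr (by linarith)) (Set.mem_Ioi.mpr (by linarith))
      (Nat.lt_floor_add_one T).le
  · filter_upwards [eventually_ge_atTop (1:ℝ)] with T hT
    have hfl : (1:ℝ) ≤ (⌊T⌋₊ : ℝ) := by
      have : 1 ≤ ⌊T⌋₊ := Nat.le_floor (by exact_mod_cast hT)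
      exact_mod_cast this
    exact fA_anti (Set.mem_Ioi.mpr (by linarith)) (Set.mem_Ioi.mpr (by linarith))
      (Nat.floor_le (by linarith))

lemma tendsto_I : Tendsto (fun T : ℝ => I T - Real.log (T/2)) atTop
    (𝓝 Real.eulerMascheroniConstant) := by
  set γ := Real.eulerMascheroniConstant
  have h2T : Tendsto (fun T : ℝ => A (2*T) - Real.log (2*T)) atTop (𝓝 γ) :=
    tendsto_fA.comp (Tendsto.const_mul_atTop two_pos tendsto_id)
  have h := (tendsto_fA.const_mul 2).sub h2T
  have hγ : (2:ℝ) * γ - γ = γ := by ring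
  rw [hγ] at h
  apply h.congr'
  filter_upwards [eventually_gt_atTop (0:ℝ)] with T hT
  rw [I_eq, Real.log_div hT.ne' two_ne_zero, Real.log_mul two_ne_zero hT.ne']
  ring






lemma chi_eq_psi_sq (u : ℝ) : chi u = psi u ^ 2 * u := by
  rcases eq_or_ne u 0 with rfl | hu
  · simp [chi, psi]
  · rw [chi, psi, if_neg hu]; field_simp

lemma norm_mk3_sq (p q r : ℝ) : ‖mk3 p q r‖ ^ 2 = p ^ 2 + q ^ 2 + r ^ 2 := by
  rw [EuclideanSpace.norm_eq, Real.sq_sqrt (by positivity)]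
  have h0 : (mk3 p q r) 0 = p := rfl
  have h1 : (mk3 p q r) 1 = q := rfl
  have h2 : (mk3 p q r) 2 = r := rfl
  rw [Fin.sum_univ_three, h0, h1, h2]
  simp [Real.norm_eq_abs, sq_abs]

lemma disk_integral
    (a b d Γ R : ℝ) (hc : 0 < a + b) (hR : 0 < R)
    (g : ℝ → ℝ → ℝ)
    (hg : ∀ ν r : ℝ, g ν r =
      if r = 0 then Γ * (a + b) / (8 * Real.pi * ν)
      else Γ * (1 - Real.exp (-((a + b) * r ^ 2) / (4 * ν))) / (2 * Real.pi * r ^ 2))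
    (v : ℝ → ℝ × ℝ → E3)
    (hv : ∀ ν : ℝ, ∀ x : ℝ × ℝ, v ν x =
      mk3 (-(a * x.1) - g ν (Real.sqrt (x.1 ^ 2 + x.2 ^ 2)) * x.2)
          (-(b * x.2) + g ν (Real.sqrt (x.1 ^ 2 + x.2 ^ 2)) * x.1)
          d)
    (ν : ℝ) (hν : 0 < ν) :
    ∫ x in {x : ℝ × ℝ | x.1 ^ 2 + x.2 ^ 2 ≤ R ^ 2}, ‖v ν x‖ ^ 2
      = Real.pi * (a ^ 2 + b ^ 2) * R ^ 4 / 4 + Real.pi * d ^ 2 * R ^ 2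
        + Γ ^ 2 / (4 * Real.pi) * I ((a + b) / (4 * ν) * R ^ 2) := by
  have hπ : 0 < Real.pi := Real.pi_pos
  set lam : ℝ := (a + b) / (4 * ν) with hlam_def
  have hlam : 0 < lam := by positivity
  -- g in terms of psi
  have hgψ : ∀ r : ℝ, g ν r = Γ * lam / (2 * Real.pi) * psi (lam * r ^ 2) := by
    intro r
    rw [hg]
    rcases eq_or_ne r 0 with rfl | hr
    · rw [if_pos rfl, show lam * (0:ℝ) ^ 2 = 0 by ring, psi, if_pos rfl, hlam_def, mul_one]
      rw [div_eq_div_iff (by positivity) (by positivity : (2:ℝ) * Real.pi ≠ 0)]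
      field_simp
      ring
    · rw [if_neg hr]
      have hlr : lam * r ^ 2 ≠ 0 := by positivity
      rw [psi, if_neg hlr]
      have harg : -((a + b) * r ^ 2) / (4 * ν) = -(lam * r ^ 2) := by
        rw [hlam_def]; field_simp
      rw [harg, hlam_def]
      field_simp
  have gcont : Continuous (g ν) := by
    have : g ν = fun r => Γ * lam / (2 * Real.pi) * psi (lam * r ^ 2) := funext hgψ
    rw [this]
    exact continuous_const.mul (psi_cont.comp (by fun_prop))
  -- the norm formula
  have normv : ∀ x : ℝ × ℝ, ‖v ν x‖ ^ 2 =
      (a * x.1 + g ν (Real.sqrt (x.1 ^ 2 + x.2 ^ 2)) * x.2) ^ 2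
        + (b * x.2 - g ν (Real.sqrt (x.1 ^ 2 + x.2 ^ 2)) * x.1) ^ 2 + d ^ 2 := by
    intro x
    rw [hv, norm_mk3_sq]
    ring
  set Φ : ℝ × ℝ → ℝ := fun p =>
    p.1 * ((a * p.1 * Real.cos p.2 + g ν p.1 * p.1 * Real.sin p.2) ^ 2
      + (b * p.1 * Real.sin p.2 - g ν p.1 * p.1 * Real.cos p.2) ^ 2 + d ^ 2) with hΦ_def
  have Φcont : Continuous Φ := by
    apply continuous_fst.mul
    fun_prop (disch := exact gcont)
  set H : ℝ × ℝ → ℝ := Set.indicator (Set.Ioc (0:ℝ) R ×ˢ (Set.univ : Set ℝ)) Φ with hH_def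
  set S : Set (ℝ × ℝ) := {x : ℝ × ℝ | x.1 ^ 2 + x.2 ^ 2 ≤ R ^ 2} with hS_def
  have hS : MeasurableSet S :=
    (isClosed_le (by fun_prop) continuous_const).measurableSet
  -- step 1-2: polar coordinates
  have step12 : ∫ x in S, ‖v ν x‖ ^ 2
      = ∫ p in polarCoord.target, p.1 • (S.indicator (fun x => ‖v ν x‖ ^ 2) (polarCoord.symm p)) := by
    rw [← MeasureTheory.integral_indicator hS, ← integral_comp_polarCoord_symm]
  have step3 : ∫ p in polarCoord.target,
        p.1 • (S.indicator (fun x => ‖v ν x‖ ^ 2) (polarCoord.symm p))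
      = ∫ p in polarCoord.target, H p := by
    apply setIntegral_congr_fun (measurableSet_Ioi.prod measurableSet_Ioo)
    rintro ⟨r, θ⟩ ⟨hr, hθ⟩
    simp only [Set.mem_Ioi] at hr
    dsimp only
    have hsymm : polarCoord.symm (r, θ) = (r * Real.cos θ, r * Real.sin θ) := rfl
    have hsq : (r * Real.cos θ) ^ 2 + (r * Real.sin θ) ^ 2 = r ^ 2 := by
      linear_combination r ^ 2 * Real.sin_sq_add_cos_sq θ
    have hsqrt : Real.sqrt ((r * Real.cos θ) ^ 2 + (r * Real.sin θ) ^ 2) = r := by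
      rw [hsq, Real.sqrt_sq hr.le]
    have hmem_iff : (r * Real.cos θ, r * Real.sin θ) ∈ S ↔ r ≤ R := by
      simp only [hS_def, Set.mem_setOf_eq, hsq]
      exact pow_le_pow_iff_left₀ hr.le hR.le two_ne_zero
    by_cases hrR : r ≤ R
    · rw [hsymm, Set.indicator_of_mem (hmem_iff.mpr hrR), hH_def,
        Set.indicator_of_mem (Set.mem_prod.mpr ⟨Set.mem_Ioc.mpr ⟨hr, hrR⟩, Set.mem_univ _⟩), hΦ_def]
      rw [normv]
      simp only [hsqrt, smul_eq_mul]
      ring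
    · rw [hsymm, Set.indicator_of_notMem (fun h => hrR (hmem_iff.mp h)), hH_def,
        Set.indicator_of_notMem (fun h => hrR (Set.mem_prod.mp h).1.2)]
      simp
  -- integrability of H on the target
  have hHint : IntegrableOn H (Set.Ioi (0:ℝ) ×ˢ Set.Ioo (-Real.pi) Real.pi)
      ((volume : Measure ℝ).prod volume) := by
    rw [hH_def, IntegrableOn, integrable_indicator_iff (measurableSet_Ioc.prod MeasurableSet.univ)]
    rw [IntegrableOn, Measure.restrict_restrict (measurableSet_Ioc.prod MeasurableSet.univ)]
    have hset : (Set.Ioc (0:ℝ) R ×ˢ (Set.univ : Set ℝ))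
        ∩ (Set.Ioi (0:ℝ) ×ˢ Set.Ioo (-Real.pi) Real.pi)
        = Set.Ioc (0:ℝ) R ×ˢ Set.Ioo (-Real.pi) Real.pi := by
      rw [Set.prod_inter_prod]
      congr 1
      · rw [Set.inter_eq_self_of_subset_left Set.Ioc_subset_Ioi_self]
      · exact Set.univ_inter _
    rw [hset]
    have hcpt : IsCompact (Set.Icc (0:ℝ) R ×ˢ Set.Icc (-Real.pi) Real.pi) :=
      isCompact_Icc.prod isCompact_Icc
    have : IntegrableOn Φ (Set.Icc (0:ℝ) R ×ˢ Set.Icc (-Real.pi) Real.pi)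
        ((volume : Measure ℝ).prod volume) := by
      apply Φcont.continuousOn.integrableOn_compact hcpt
    exact this.mono_set (Set.prod_mono Set.Ioc_subset_Icc_self Set.Ioo_subset_Icc_self)
  -- Fubini
  have step5 : ∫ p in polarCoord.target, H p
      = ∫ r in Set.Ioi (0:ℝ), ∫ θ in Set.Ioo (-Real.pi) Real.pi, H (r, θ) := by
    rw [show polarCoord.target = Set.Ioi (0:ℝ) ×ˢ Set.Ioo (-Real.pi) Real.pi from rfl,
      Measure.volume_eq_prod]
    exact setIntegral_prod H hHint
  -- inner integral
  have step6 : ∫ r in Set.Ioi (0:ℝ), ∫ θ in Set.Ioo (-Real.pi) Real.pi, H (r, θ)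
      = ∫ r in Set.Ioi (0:ℝ), (Set.Ioc (0:ℝ) R).indicator
          (fun r => r * (Real.pi * (a ^ 2 + b ^ 2) * r ^ 2
            + 2 * Real.pi * (g ν r) ^ 2 * r ^ 2 + 2 * Real.pi * d ^ 2)) r := by
    apply setIntegral_congr_fun measurableSet_Ioi
    intro r hr
    by_cases hrR : r ∈ Set.Ioc (0:ℝ) R
    · have hHval : ∀ θ : ℝ, H (r, θ) = Φ (r, θ) := fun θ =>
        Set.indicator_of_mem (Set.mem_prod.mpr ⟨hrR, Set.mem_univ _⟩) Φ
      rw [Set.indicator_of_mem hrR]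
      simp_rw [hHval]
      rw [← integral_Ioc_eq_integral_Ioo,
        ← intervalIntegral.integral_of_le (by linarith : -Real.pi ≤ Real.pi)]
      have hexpand : ∀ θ : ℝ, Φ (r, θ) =
          (r * (a ^ 2 * r ^ 2 + (g ν r) ^ 2 * r ^ 2)) * Real.cos θ ^ 2
          + (r * (b ^ 2 * r ^ 2 + (g ν r) ^ 2 * r ^ 2)) * Real.sin θ ^ 2
          + (2 * (g ν r) * r ^ 3 * (a - b)) * (Real.sin θ * Real.cos θ)
          + r * d ^ 2 := by
        intro θ; rw [hΦ_def]; ring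
      rw [intervalIntegral.integral_congr (fun θ _ => hexpand θ)]
      have i1 : IntervalIntegrable (fun θ : ℝ => (r * (a ^ 2 * r ^ 2 + (g ν r) ^ 2 * r ^ 2)) * Real.cos θ ^ 2) volume (-Real.pi) Real.pi := (Continuous.intervalIntegrable (by fun_prop) _ _)
      have i2 : IntervalIntegrable (fun θ : ℝ => (r * (b ^ 2 * r ^ 2 + (g ν r) ^ 2 * r ^ 2)) * Real.sin θ ^ 2) volume (-Real.pi) Real.pi := (Continuous.intervalIntegrable (by fun_prop) _ _)
      have i3 : IntervalIntegrable (fun θ : ℝ => (2 * (g ν r) * r ^ 3 * (a - b)) * (Real.sin θ * Real.cos θ)) volume (-Real.pi) Real.pi := (Continuous.intervalIntegrable (by fun_prop) _ _)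
      have i4 : IntervalIntegrable (fun _ : ℝ => r * d ^ 2) volume (-Real.pi) Real.pi := intervalIntegrable_const
      rw [intervalIntegral.integral_add (((i1.add i2).add i3)) i4,
        intervalIntegral.integral_add (i1.add i2) i3,
        intervalIntegral.integral_add i1 i2,
        intervalIntegral.integral_const_mul, intervalIntegral.integral_const_mul,
        intervalIntegral.integral_const_mul,
        integral_cos_sq, integral_sin_sq, integral_sin_mul_cos₁,
        intervalIntegral.integral_const]
      simp [Real.sin_pi, Real.sin_neg, Real.cos_pi, Real.cos_neg]
      ring
    · have hHval : ∀ θ : ℝ, H (r, θ) = 0 := fun θ =>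
        Set.indicator_of_notMem (fun h => hrR (Set.mem_prod.mp h).1) Φ
      rw [Set.indicator_of_notMem hrR]
      simp_rw [hHval]
      simp
  -- outer integral
  have step7 : ∫ r in Set.Ioi (0:ℝ), (Set.Ioc (0:ℝ) R).indicator
        (fun r => r * (Real.pi * (a ^ 2 + b ^ 2) * r ^ 2
          + 2 * Real.pi * (g ν r) ^ 2 * r ^ 2 + 2 * Real.pi * d ^ 2)) r
      = ∫ r in (0:ℝ)..R, r * (Real.pi * (a ^ 2 + b ^ 2) * r ^ 2
          + 2 * Real.pi * (g ν r) ^ 2 * r ^ 2 + 2 * Real.pi * d ^ 2) := by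
    rw [setIntegral_indicator measurableSet_Ioc,
      Set.inter_eq_self_of_subset_right Set.Ioc_subset_Ioi_self,
      intervalIntegral.integral_of_le hR.le]
  -- compute the radial integral
  have key_integrand : ∀ r : ℝ,
      r * (Real.pi * (a ^ 2 + b ^ 2) * r ^ 2
          + 2 * Real.pi * (g ν r) ^ 2 * r ^ 2 + 2 * Real.pi * d ^ 2)
      = (Real.pi * (a ^ 2 + b ^ 2) * r ^ 3 + 2 * Real.pi * d ^ 2 * r)
        + Γ ^ 2 / (4 * Real.pi) * ((2 * lam * r) * chi (lam * r ^ 2)) := by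
    intro r
    rw [hgψ r, chi_eq_psi_sq]
    field_simp
    ring
  have hint_poly : IntervalIntegrable
      (fun r : ℝ => Real.pi * (a ^ 2 + b ^ 2) * r ^ 3 + 2 * Real.pi * d ^ 2 * r)
      volume 0 R := (Continuous.intervalIntegrable (by fun_prop) _ _)
  have hint_chi : IntervalIntegrable
      (fun r : ℝ => Γ ^ 2 / (4 * Real.pi) * ((2 * lam * r) * chi (lam * r ^ 2)))
      volume 0 R := by
    apply Continuous.intervalIntegrable
    exact continuous_const.mul ((by fun_prop : Continuous fun r : ℝ => 2 * lam * r).mul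
      (chi_cont.comp (by fun_prop)))
  have step8 : ∫ r in (0:ℝ)..R, r * (Real.pi * (a ^ 2 + b ^ 2) * r ^ 2
          + 2 * Real.pi * (g ν r) ^ 2 * r ^ 2 + 2 * Real.pi * d ^ 2)
      = Real.pi * (a ^ 2 + b ^ 2) * R ^ 4 / 4 + Real.pi * d ^ 2 * R ^ 2
        + Γ ^ 2 / (4 * Real.pi) * I (lam * R ^ 2) := by
    rw [intervalIntegral.integral_congr (fun r _ => key_integrand r),
      intervalIntegral.integral_add hint_poly hint_chi]
    have h1 : ∫ r in (0:ℝ)..R, (Real.pi * (a ^ 2 + b ^ 2) * r ^ 3 + 2 * Real.pi * d ^ 2 * r)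
        = Real.pi * (a ^ 2 + b ^ 2) * R ^ 4 / 4 + Real.pi * d ^ 2 * R ^ 2 := by
      rw [intervalIntegral.integral_add
        ((Continuous.intervalIntegrable (by fun_prop) _ _))
        ((Continuous.intervalIntegrable (by fun_prop) _ _)),
        intervalIntegral.integral_const_mul, intervalIntegral.integral_const_mul,
        integral_pow, integral_id]
      norm_num
      ring
    have h2 : ∫ r in (0:ℝ)..R, Γ ^ 2 / (4 * Real.pi) * ((2 * lam * r) * chi (lam * r ^ 2))
        = Γ ^ 2 / (4 * Real.pi) * I (lam * R ^ 2) := by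
      rw [intervalIntegral.integral_const_mul]
      congr 1
      have hderiv : ∀ x ∈ Set.uIcc (0:ℝ) R,
          HasDerivAt (fun r : ℝ => lam * r ^ 2) (2 * lam * x) x := by
        intro x _
        have := (hasDerivAt_pow 2 x).const_mul lam
        simpa [mul_comm, mul_assoc, mul_left_comm] using this
      have := intervalIntegral.integral_comp_smul_deriv hderiv
        (by fun_prop : Continuous fun x : ℝ => 2 * lam * x).continuousOn chi_cont
      simp only [smul_eq_mul, Function.comp_apply] at this
      rw [this]
      norm_num [I]
    rw [h1, h2]
  rw [step12, step3, step5, step6, step7, step8]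



end S16

/-- Let `a, b, d, Γ ∈ ℝ` with `c = a + b > 0` and `R > 0`.  For `ν > 0`
let `g_ν(r) = Γ(1 − e^{−cr²/(4ν)})/(2πr²)` (extended by its limit `Γc/(8πν)` at `r = 0`)
and `v_ν(x,y) = (−ax − g_ν(r)y, −by + g_ν(r)x, d)` with `r = √(x² + y²)`.  Then the
regularized core energy has the finite inviscid limit
`lim_{ν→0⁺} [ ½∫_{x²+y²≤R²} |v_ν|² − (Γ²/(8π))(γ_EM + log(cR²/(8ν))) ]
  = πR²d²/2 + πR⁴(a² + b²)/8`,
so the core kinetic energy diverges logarithmically as `ν → 0⁺` with coefficient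
`Γ²/(8π)`. -/
theorem statement16
    (a b d Γ R : ℝ) (hc : 0 < a + b) (hR : 0 < R)
    (g : ℝ → ℝ → ℝ)
    (hg : ∀ ν r : ℝ, g ν r =
      if r = 0 then Γ * (a + b) / (8 * Real.pi * ν)
      else Γ * (1 - Real.exp (-((a + b) * r ^ 2) / (4 * ν))) / (2 * Real.pi * r ^ 2))
    (v : ℝ → ℝ × ℝ → E3)
    (hv : ∀ ν : ℝ, ∀ x : ℝ × ℝ, v ν x =
      mk3 (-(a * x.1) - g ν (Real.sqrt (x.1 ^ 2 + x.2 ^ 2)) * x.2)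
          (-(b * x.2) + g ν (Real.sqrt (x.1 ^ 2 + x.2 ^ 2)) * x.1)
          d) :
    Filter.Tendsto
      (fun ν : ℝ =>
        (1 / 2) * (∫ x in {x : ℝ × ℝ | x.1 ^ 2 + x.2 ^ 2 ≤ R ^ 2}, ‖v ν x‖ ^ 2) -
          Γ ^ 2 / (8 * Real.pi) *
            (Real.eulerMascheroniConstant + Real.log ((a + b) * R ^ 2 / (8 * ν))))
      (𝓝[>] (0:ℝ))
      (𝓝 (Real.pi * R ^ 2 * d ^ 2 / 2 + Real.pi * R ^ 4 * (a ^ 2 + b ^ 2) / 8)) := by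
  classical
  have hπ : 0 < Real.pi := Real.pi_pos
  have hmain := S16.tendsto_I
  have hT : Filter.Tendsto (fun ν : ℝ => (a + b) / (4 * ν) * R ^ 2) (𝓝[>] (0:ℝ)) atTop := by
    have h1 : Filter.Tendsto (fun ν : ℝ => ν⁻¹) (𝓝[>] (0:ℝ)) atTop := tendsto_inv_nhdsGT_zero
    have h2 := Filter.Tendsto.const_mul_atTop
      (show (0:ℝ) < (a + b) * R ^ 2 / 4 by positivity) h1
    apply h2.congr
    intro ν
    simp only [div_eq_mul_inv, mul_inv]
    ring
  have hcomp : Filter.Tendsto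
      (fun ν : ℝ => S16.I ((a + b) / (4 * ν) * R ^ 2)
        - Real.log ((a + b) / (4 * ν) * R ^ 2 / 2)) (𝓝[>] (0:ℝ))
      (𝓝 Real.eulerMascheroniConstant) := hmain.comp hT
  set L : ℝ := Real.pi * R ^ 2 * d ^ 2 / 2 + Real.pi * R ^ 4 * (a ^ 2 + b ^ 2) / 8 with hL
  have hG : Filter.Tendsto
      (fun ν : ℝ => L + Γ ^ 2 / (8 * Real.pi)
        * ((S16.I ((a + b) / (4 * ν) * R ^ 2)
            - Real.log ((a + b) / (4 * ν) * R ^ 2 / 2)) - Real.eulerMascheroniConstant))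
      (𝓝[>] (0:ℝ)) (𝓝 L) := by
    have h := Filter.Tendsto.const_add L
      (Filter.Tendsto.const_mul (Γ ^ 2 / (8 * Real.pi))
        (hcomp.sub_const Real.eulerMascheroniConstant))
    simpa using h
  apply hG.congr'
  filter_upwards [self_mem_nhdsWithin] with ν hν
  have hν : (0:ℝ) < ν := hν
  rw [S16.disk_integral a b d Γ R hc hR g hg v hv ν hν]
  have hlog : (a + b) * R ^ 2 / (8 * ν) = (a + b) / (4 * ν) * R ^ 2 / 2 := by
    field_simp
    ring
  rw [hlog]
  ring
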